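/- Let H be a subgroup of GL(V) for a vector space V over a field, containing all nonzero scalar operators, and let AH ≤ AGL(V) be generated by H together with all translations. Then H is irreducible as a linear group if and only if AH is primitive as a permutation group on V. Moreover the number of orbits of H on V equals the rank of AH (the number of orbits of AH on V × V). -/

import Mathlib

open MulAction Pointwise

section Aux

theorem perm_apply_inv_self' {α : Type*} (f : Equiv.Perm α) (x : α) : f (f⁻¹ x) = x := by
  simp

variable {F V : Type*} [Field F] [AddCommGroup V] [Module F V]

/-- The affine group generated by `H` and translations, as a set:
every element has the form `v ↦ h v + w`. -/
theorem affine_mem (H : Subgroup (Equiv.Perm V))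
    (hlin : ∀ σ ∈ H, ∃ e : V ≃ₗ[F] V, ∀ v, σ v = e v) (σ : Equiv.Perm V) :
    σ ∈ H ⊔ Subgroup.closure {σ : Equiv.Perm V | ∃ w : V, ∀ v, σ v = v + w} ↔
      ∃ h ∈ H, ∃ w : V, ∀ v, σ v = h v + w := by
  have hadd : ∀ τ ∈ H, ∀ a b : V, τ (a + b) = τ a + τ b := by
    intro τ hτ a b
    obtain ⟨e, he⟩ := hlin τ hτ
    simp [he, map_add]
  have hneg : ∀ τ ∈ H, ∀ a : V, τ (-a) = -τ a := by
    intro τ hτ a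
    obtain ⟨e, he⟩ := hlin τ hτ
    simp [he, map_neg]
  constructor
  · intro hσ
    have : σ ∈ Subgroup.closure ((H : Set (Equiv.Perm V)) ∪
        {σ : Equiv.Perm V | ∃ w : V, ∀ v, σ v = v + w}) := by
      rw [Subgroup.closure_union, Subgroup.closure_eq]
      exact hσ
    refine Subgroup.closure_induction ?_ ?_ ?_ ?_ this
    · rintro τ (hτ | ⟨w, hw⟩)
      · exact ⟨τ, hτ, 0, fun v => by simp⟩
      · exact ⟨1, one_mem H, w, fun v => by simpa using hw v⟩
    · exact ⟨1, one_mem H, 0, fun v => by simp⟩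
    · rintro σ₁ σ₂ _ _ ⟨h₁, hh₁, w₁, e₁⟩ ⟨h₂, hh₂, w₂, e₂⟩
      refine ⟨h₁ * h₂, mul_mem hh₁ hh₂, h₁ w₂ + w₁, fun v => ?_⟩
      simp only [Equiv.Perm.mul_apply, e₁, e₂, hadd h₁ hh₁]
      abel
    · rintro τ _ ⟨h, hh, w, e⟩
      refine ⟨h⁻¹, inv_mem hh, -(h⁻¹ w), fun v => ?_⟩
      apply τ.injective
      rw [perm_apply_inv_self', e, hadd h hh, hneg h hh,
        perm_apply_inv_self', perm_apply_inv_self']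
      abel
  · rintro ⟨h, hh, w, e⟩
    have h1 : σ = h * Equiv.addRight (h⁻¹ w) := by
      ext v
      simp only [Equiv.Perm.mul_apply, e, Equiv.coe_addRight, hadd h hh,
        perm_apply_inv_self']
    rw [h1]
    exact mul_mem (Subgroup.mem_sup_left hh)
      (Subgroup.mem_sup_right (Subgroup.subset_closure ⟨h⁻¹ w, fun v => rfl⟩))

end Aux

/-- Let `H` be a subgroup of `GL(V)` (realized as a subgroup of the permutations of `V`
consisting of linear maps) containing all nonzero scalar operators, and let `AH` be the
subgroup of the affine group generated by `H` and all translations. Then `H` is irreducible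
as a linear group iff `AH` is primitive as a permutation group on `V` (i.e. transitive with
only trivial blocks); moreover the number of orbits of `H` on `V` equals the rank of `AH`,
the number of orbits of `AH` on `V × V`. -/
theorem stmt_16 {F V : Type*} [Field F] [AddCommGroup V] [Module F V]
    (H : Subgroup (Equiv.Perm V))
    (hlin : ∀ σ ∈ H, ∃ e : V ≃ₗ[F] V, ∀ v, σ v = e v)
    (hscalar : ∀ c : F, c ≠ 0 → ∀ σ : Equiv.Perm V, (∀ v, σ v = c • v) → σ ∈ H) :
    let AH : Subgroup (Equiv.Perm V) :=
      H ⊔ Subgroup.closure {σ : Equiv.Perm V | ∃ w : V, ∀ v, σ v = v + w}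
    ((∀ W : Submodule F V, (∀ σ ∈ H, ∀ v ∈ W, σ v ∈ W) → W = ⊥ ∨ W = ⊤) ↔
      (MulAction.IsPretransitive ↥AH V ∧
        ∀ B : Set V, MulAction.IsBlock ↥AH B → B.Subsingleton ∨ B = Set.univ)) ∧
    Cardinal.mk (MulAction.orbitRel.Quotient ↥H V) =
      Cardinal.mk (MulAction.orbitRel.Quotient ↥AH (V × V)) := by
  intro AH
  have hmem : ∀ σ : Equiv.Perm V, σ ∈ AH ↔ ∃ h ∈ H, ∃ w : V, ∀ v, σ v = h v + w :=
    affine_mem H hlin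
  have hzero : ∀ τ ∈ H, τ (0 : V) = 0 := by
    intro τ hτ
    obtain ⟨e, he⟩ := hlin τ hτ
    simp [he]
  have hsub : ∀ τ ∈ H, ∀ a b : V, τ (a - b) = τ a - τ b := by
    intro τ hτ a b
    obtain ⟨e, he⟩ := hlin τ hτ
    simp [he, map_sub]
  -- translations are in AH
  have htr : ∀ w : V, Equiv.addRight w ∈ AH := fun w =>
    Subgroup.mem_sup_right (Subgroup.subset_closure ⟨w, fun v => rfl⟩)
  -- smul of elements of AH on V
  have hsmul : ∀ (g : ↥AH) (v : V), g • v = (g : Equiv.Perm V) v := fun g v => rfl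
  have hsmulH : ∀ (g : ↥H) (v : V), g • v = (g : Equiv.Perm V) v := fun g v => rfl
  -- transitivity
  have htrans : MulAction.IsPretransitive ↥AH V := by
    constructor
    intro a b
    refine ⟨⟨Equiv.addRight (b - a), htr _⟩, ?_⟩
    show (Equiv.addRight (b - a)) a = b
    simp
  -- scalar permutations
  have hscalPerm : ∀ c : F, c ≠ 0 → ∃ σ : Equiv.Perm V, σ ∈ H ∧ ∀ v, σ v = c • v := by
    intro c hc
    refine ⟨(LinearEquiv.smulOfNeZero F V c hc).toEquiv, ?_, ?_⟩
    · exact hscalar c hc _ (fun v => rfl)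
    · exact fun v => rfl
  constructor
  · constructor
    · -- irreducible → primitive
      intro hW
      refine ⟨htrans, ?_⟩
      intro B hB
      rcases B.eq_empty_or_nonempty with hBe | ⟨b, hb⟩
      · left; rw [hBe]; exact Set.subsingleton_empty
      · -- translate B to contain 0
        set g : ↥AH := ⟨Equiv.addRight (-b), htr _⟩ with hg
        set B' : Set V := g • B with hB'
        have hB'block : MulAction.IsBlock ↥AH B' := hB.translate g
        have h0B' : (0 : V) ∈ B' := by
          refine ⟨b, hb, ?_⟩
          show g • b = 0
          rw [hsmul]
          show (Equiv.addRight (-b)) b = 0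
          simp
        -- any element of AH fixing some point of B' stabilizes B'
        have hstab : ∀ (k : ↥AH) (x : V), x ∈ B' → (k : Equiv.Perm V) x ∈ B' →
            ∀ y ∈ B', (k : Equiv.Perm V) y ∈ B' := by
          intro k x hx hkx y hy
          have := hB'block.smul_eq_of_mem (g := k) hx hkx
          rw [← this]
          exact ⟨y, hy, rfl⟩
        -- B' is a submodule
        have hadd' : ∀ x ∈ B', ∀ y ∈ B', x + y ∈ B' := by
          intro x hx y hy
          have := hstab ⟨Equiv.addRight y, htr y⟩ 0 h0B' (by simpa using hy) x hx
          simpa using this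
        have hsmul' : ∀ (c : F), ∀ x ∈ B', c • x ∈ B' := by
          intro c x hx
          rcases eq_or_ne c 0 with rfl | hc
          · simpa using h0B'
          · obtain ⟨σ, hσ, hσv⟩ := hscalPerm c hc
            have h0 : σ 0 ∈ B' := by rw [hσv]; simpa using h0B'
            have := hstab ⟨σ, Subgroup.mem_sup_left hσ⟩ 0 h0B' h0 x hx
            rwa [hσv] at this
        set W : Submodule F V :=
          { carrier := B'
            add_mem' := fun hx hy => hadd' _ hx _ hy
            zero_mem' := h0B'
            smul_mem' := fun c x hx => hsmul' c x hx } with hWdef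
        have hWinv : ∀ σ ∈ H, ∀ v ∈ W, σ v ∈ W := by
          intro σ hσ v hv
          have h0 : σ 0 ∈ B' := by rw [hzero σ hσ]; exact h0B'
          exact hstab ⟨σ, Subgroup.mem_sup_left hσ⟩ 0 h0B' h0 v hv
        rcases hW W hWinv with hbot | htop
        · left
          have hBsub : B'.Subsingleton := by
            intro x hx y hy
            have hx' : x ∈ W := hx
            have hy' : y ∈ W := hy
            rw [hbot, Submodule.mem_bot] at hx' hy'
            rw [hx', hy']
          intro x hx y hy
          have hgx : (g : Equiv.Perm V) x ∈ B' := ⟨x, hx, rfl⟩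
          have hgy : (g : Equiv.Perm V) y ∈ B' := ⟨y, hy, rfl⟩
          exact (g : Equiv.Perm V).injective (hBsub hgx hgy)
        · right
          apply Set.eq_univ_of_forall
          intro x
          have : (g : Equiv.Perm V) x ∈ B' := by
            have : (g : Equiv.Perm V) x ∈ W := by rw [htop]; trivial
            exact this
          obtain ⟨y, hy, hxy⟩ := this
          rwa [(g : Equiv.Perm V).injective hxy] at hy
    · -- primitive → irreducible
      rintro ⟨_, hprim⟩ W hWinv
      have hWblock : MulAction.IsBlock ↥AH (W : Set V) := by
        rw [MulAction.isBlock_iff_smul_eq_of_mem]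
        intro k a ha hka
        obtain ⟨h, hh, w, e⟩ := (hmem k).mp k.2
        have hka' : h a + w ∈ W := by rw [hsmul, e] at hka; exact hka
        have hha : h a ∈ W := hWinv h hh a ha
        have hwW : w ∈ W := by
          have := W.sub_mem hka' hha
          simpa using this
        ext v
        constructor
        · rintro ⟨u, hu, rfl⟩
          show k • u ∈ (W : Set V)
          rw [hsmul, e u]
          exact W.add_mem (hWinv h hh u hu) hwW
        · intro hv
          refine ⟨h⁻¹ (v - w), ?_, ?_⟩
          · exact hWinv h⁻¹ (inv_mem hh) _ (W.sub_mem hv hwW)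
          · show k • (h⁻¹ (v - w)) = v
            rw [hsmul, e, perm_apply_inv_self']
            abel
      rcases hprim (W : Set V) hWblock with hsub' | huniv
      · left
        rw [Submodule.eq_bot_iff]
        intro x hx
        exact hsub' hx W.zero_mem
      · right
        rw [Submodule.eq_top_iff']
        intro v
        have : v ∈ (W : Set V) := by rw [huniv]; trivial
        exact this
  · -- orbit count
    have hwd : ∀ v₁ v₂ : V, (MulAction.orbitRel ↥H V).r v₁ v₂ →
        (MulAction.orbitRel ↥AH (V × V)).r (0, v₁) (0, v₂) := by
      intro v₁ v₂ h12
      obtain ⟨h, hh⟩ := h12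
      refine ⟨⟨(h : Equiv.Perm V), Subgroup.mem_sup_left h.2⟩, ?_⟩
      have h0 : (h : Equiv.Perm V) 0 = 0 := hzero _ h.2
      show ((h : Equiv.Perm V) 0, (h : Equiv.Perm V) v₂) = (0, v₁)
      rw [h0]
      exact congrArg _ hh
    let f : MulAction.orbitRel.Quotient ↥H V → MulAction.orbitRel.Quotient ↥AH (V × V) :=
      Quotient.lift (fun v => ⟦(0, v)⟧) (fun v₁ v₂ h => Quotient.sound (hwd v₁ v₂ h))
    have hinj : Function.Injective f := by
      intro q₁ q₂
      induction q₁ using Quotient.inductionOn with | _ v₁ => ?_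
      induction q₂ using Quotient.inductionOn with | _ v₂ => ?_
      intro hq
      have h12 : (MulAction.orbitRel ↥AH (V × V)).r (0, v₁) (0, v₂) := Quotient.exact hq
      obtain ⟨k, hk⟩ := h12
      obtain ⟨h, hh, w, e⟩ := (hmem k).mp k.2
      have hk1 : (k : Equiv.Perm V) 0 = 0 := congrArg Prod.fst hk
      have hk2 : (k : Equiv.Perm V) v₂ = v₁ := congrArg Prod.snd hk
      have hw0 : w = 0 := by
        have := e 0
        rw [hk1, hzero h hh, zero_add] at this
        exact this.symm
      have hkH : (k : Equiv.Perm V) ∈ H := by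
        have : (k : Equiv.Perm V) = h := by
          ext v; rw [e v, hw0, add_zero]
        rw [this]; exact hh
      exact Quotient.sound ⟨⟨(k : Equiv.Perm V), hkH⟩, hk2⟩
    have hsurj : Function.Surjective f := by
      intro q
      induction q using Quotient.inductionOn with | _ p => ?_
      obtain ⟨a, b⟩ := p
      refine ⟨⟦b - a⟧, ?_⟩
      show ⟦((0 : V), b - a)⟧ = ⟦(a, b)⟧
      refine Quotient.sound ?_
      refine ⟨⟨Equiv.addRight (-a), htr (-a)⟩, ?_⟩
      show ((Equiv.addRight (-a)) a, (Equiv.addRight (-a)) b) = (0, b - a)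
      simp [sub_eq_add_neg]
    exact Cardinal.mk_congr (Equiv.ofBijective f ⟨hinj, hsurj⟩)
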